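/- Let (h_k)_{k≥0} be a non-decreasing real sequence with ∑_k 2^{−k} h_k < ∞, and for each n let Φ_n be the first order branching clustering function on 𝕃₀⁽ⁿ⁾ with parameters (h_k)_{k=0}^n and h = h_n. If lim_{k→∞} k·2^k·e^{−h_k} = ∞ (equivalently, lim_{k→∞} ((ln 2)k + ln k − h_k) = ∞), then there is no wetting transition, i.e. J* = −∞. -/

import Mathlib

open Filter
open scoped Classical

noncomputable section

namespace PWC

/-- Leaves of the binary tree `𝕋⁽ⁿ⁾` of depth `n`: binary words of length `n`
(coordinate `0` is the first step away from the root). -/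
abbrev Leaf (n : ℕ) := Fin n → Bool

/-- The age (distance from the leaves) of the youngest common ancestor `u ∧ v` of two
leaves: `n` minus the length of their longest common prefix. -/
def meetAge {n : ℕ} (u v : Leaf n) : ℕ :=
  if u = v then 0 else n - sInf {i : ℕ | ∃ h : i < n, u ⟨i, h⟩ ≠ v ⟨i, h⟩}

/-- Canonical representative (as a leaf) of the ancestor of `u` at age `k`:
keep the first `n - k` coordinates and pad by `false`. -/
def trunc {n : ℕ} (k : ℕ) (u : Leaf n) : Leaf n :=
  fun i => if (i : ℕ) < n - k then u i else false

/-- The branching points `ℬ(A) ∩ 𝕃_k` of `A` of age `k`, encoded by the canonical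
representatives of the corresponding ancestors. -/
def branchPts {n : ℕ} (A : Finset (Leaf n)) (k : ℕ) : Finset (Leaf n) :=
  ((A ×ˢ A).filter (fun p => meetAge p.1 p.2 = k)).image (fun p => trunc k p.1)

/-- `b_k(A)`: the number of branching points of `A` of age `k`. -/
def bcount {n : ℕ} (A : Finset (Leaf n)) (k : ℕ) : ℕ := (branchPts A k).card

/-- `b_{k,ℓ}(A)`: the number of branching points of `A` of age `ℓ` whose direct
branching ancestor has age `k`; for `k = n+1` the indicator that the oldest branching
point of `A` has age `ℓ` (i.e. the branching points at age `ℓ` having no strictly older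
branching ancestor). -/
def b2count {n : ℕ} (A : Finset (Leaf n)) (k l : ℕ) : ℕ :=
  if k = n + 1 then
    ((branchPts A l).filter (fun w => ∀ j, l < j → j ≤ n → trunc j w ∉ branchPts A j)).card
  else
    ((branchPts A l).filter (fun w => trunc k w ∈ branchPts A k ∧
      ∀ j, l < j → j < k → trunc j w ∉ branchPts A j)).card

/-- `A ≺ B` : `A` is more clustered than `B`. -/
def MoreClustered {n : ℕ} (A B : Finset (Leaf n)) : Prop :=
  ∃ σ : Leaf n → Leaf n, Set.BijOn σ ↑A ↑B ∧
    ∀ u ∈ A, ∀ v ∈ A, meetAge u v ≤ meetAge (σ u) (σ v)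

/-- `A ∼ B` : the subtrees of `𝕋⁽ⁿ⁾` generated by `A` and `B` are graph-isomorphic,
i.e. there is a bijection of the leaf sets preserving all meet ages. -/
def EquivClustered {n : ℕ} (A B : Finset (Leaf n)) : Prop :=
  ∃ σ : Leaf n → Leaf n, Set.BijOn σ ↑A ↑B ∧
    ∀ u ∈ A, ∀ v ∈ A, meetAge (σ u) (σ v) = meetAge u v

/-- A clustering function: vanishes on `∅` and is invariant under isomorphism of the
generated subtrees. -/
def IsClusteringFn {n : ℕ} (Φ : Finset (Leaf n) → ℝ) : Prop :=
  Φ ∅ = 0 ∧ ∀ A B : Finset (Leaf n), EquivClustered A B → Φ A = Φ B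

/-- A monotone clustering function. -/
def IsMonotoneClusteringFn {n : ℕ} (Φ : Finset (Leaf n) → ℝ) : Prop :=
  IsClusteringFn Φ ∧
    (∀ A B : Finset (Leaf n), MoreClustered A B → Φ A ≤ Φ B) ∧
    (∀ A B : Finset (Leaf n), Disjoint A B → Φ (A ∪ B) ≤ Φ A + Φ B)

/-- The partition function `Z_n^{Φ,J}`. -/
def Z (n : ℕ) (Φ : Finset (Leaf n) → ℝ) (J : ℝ) : ℝ :=
  ∑ A : Finset (Leaf n), Real.exp (J * (A.card : ℝ) - Φ A)

/-- The finite-volume free energy `ζ_n^Φ(J) = 2⁻ⁿ ln Z_n^{Φ,J}`. -/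
def zetaN (n : ℕ) (Φ : Finset (Leaf n) → ℝ) (J : ℝ) : ℝ :=
  Real.log (Z n Φ J) / 2 ^ n

/-- The canonical partition function `W_n^Φ(a₀)`. -/
def W (n : ℕ) (Φ : Finset (Leaf n) → ℝ) (a₀ : ℕ) : ℝ :=
  ∑ A ∈ Finset.univ.filter (fun A : Finset (Leaf n) => A.card = a₀), Real.exp (-Φ A)

/-- The finite-volume canonical free energy `ω_n^Φ(ε) = 2⁻ⁿ ln W_n^Φ(ε 2ⁿ)` (for a
dyadic `ε ∈ [0,1]` and `n` large, `⌊ε 2ⁿ⌋ = ε 2ⁿ`). -/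
def omegaN (n : ℕ) (Φ : Finset (Leaf n) → ℝ) (ε : ℝ) : ℝ :=
  Real.log (W n Φ ⌊ε * 2 ^ n⌋₊) / 2 ^ n

/-- The expected density `ρ_n^Φ(J)` of the dry set under the PWC measure. -/
def rhoN (n : ℕ) (Φ : Finset (Leaf n) → ℝ) (J : ℝ) : ℝ :=
  (∑ A : Finset (Leaf n), (A.card : ℝ) * Real.exp (J * (A.card : ℝ) - Φ A)) /
    (2 ^ n * Z n Φ J)

/-- A dyadic rational. -/
def IsDyadic (x : ℝ) : Prop := ∃ (k : ℤ) (m : ℕ), x = (k : ℝ) / 2 ^ m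

/-- The hypotheses of the general theory (Proposition 1.2): each `Φ_n` (for `n ≥ 1`) is
a monotone, non-negative clustering function, and `Φ_n(A) ≤ Φ_{n-1}(A) + γ_n` for any
`A` contained in the leaf set of one of the two subtrees of `𝕋⁽ⁿ⁾` rooted at a child of
the root (identified with `𝕋⁽ⁿ⁻¹⁾` by prepending the corresponding letter), where
`γ_n ≥ 0` and `∑ γ_n 2⁻ⁿ < ∞`. -/
structure GoodSeq (Φ : ∀ n, Finset (Fin n → Bool) → ℝ) (γ : ℕ → ℝ) : Prop where
  mono : ∀ n, 1 ≤ n → IsMonotoneClusteringFn (Φ n)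
  nonneg : ∀ n, 1 ≤ n → ∀ A, 0 ≤ Φ n A
  gamma_nonneg : ∀ n, 0 ≤ γ n
  gamma_summable : Summable fun n => γ n / 2 ^ n
  subtree : ∀ (n : ℕ) (b : Bool) (A : Finset (Fin n → Bool)),
    Φ (n + 1) (A.image fun u => Fin.cons b u) ≤ Φ n A + γ (n + 1)

/-- The first order branching clustering function with parameters `(h_k)_{k=0}^n`, `h`. -/
def foPhi (n : ℕ) (hs : ℕ → ℝ) (h : ℝ) (A : Finset (Leaf n)) : ℝ :=
  if A = ∅ then 0 else (∑ k ∈ Finset.range (n + 1), hs k * (bcount A k : ℝ)) + h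

/-- The second order branching clustering function with parameters
`(h_{k,ℓ})_{0 ≤ ℓ < k ≤ n+1}`, `h`. -/
def soPhi (n : ℕ) (H : ℕ → ℕ → ℝ) (h : ℝ) (A : Finset (Leaf n)) : ℝ :=
  if A = ∅ then 0
  else (∑ k ∈ Finset.range (n + 2), ∑ l ∈ Finset.range k, H k l * (b2count A k l : ℝ)) + h

/-- A non-decreasing (infinite) triangular array. -/
def ArrayMono (H : ℕ → ℕ → ℝ) : Prop :=
  ∀ k k' l l' : ℕ, l < k → l' < k' → k ≤ k' → l ≤ l' → H k l ≤ H k' l'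

/-- The Dirichlet energy on `𝕋⁽ⁿ⁾` of `f` (vertices encoded as words of length `≤ n`,
read from the root; a vertex of length `m` has age `n - m` and its parent edge has
conductance `C (n - m)`). -/
def energy (n : ℕ) (C : ℕ → ℝ) (f : List Bool → ℝ) : ℝ :=
  ∑ m ∈ Finset.Icc 1 n, ∑ v : Fin m → Bool,
    C (n - m) * (f (List.ofFn v) - f (List.ofFn v).dropLast) ^ 2

/-- The capacity of a set of leaves `A ⊆ 𝕃₀⁽ⁿ⁾`. -/
def cap (n : ℕ) (C : ℕ → ℝ) (A : Finset (Leaf n)) : ℝ :=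
  sInf {x : ℝ | ∃ f : List Bool → ℝ, f [] = 1 ∧ (∀ u ∈ A, f (List.ofFn u) = 0) ∧
    x = energy n C f}


section AuxiliaryProofs

-- ============ combinatorial lemmas ============

lemma meetAge_self {n : ℕ} (u : Leaf n) : meetAge u u = 0 := if_pos rfl

lemma meetAge_le {n : ℕ} (u v : Leaf n) : meetAge u v ≤ n := by
  unfold meetAge; split
  · exact Nat.zero_le n
  · exact Nat.sub_le _ _

lemma meetAge_cons_same {n : ℕ} (b : Bool) (u v : Leaf n) :
    meetAge (Fin.cons b u) (Fin.cons b v) = meetAge u v := by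
  rcases eq_or_ne u v with h | h
  · subst h; simp [meetAge_self]
  · have hne : (Fin.cons b u : Leaf (n+1)) ≠ Fin.cons b v := by
      intro hc
      exact h (funext fun i => by
        have := congrFun hc i.succ
        simpa using this)
    unfold meetAge
    rw [if_neg hne, if_neg h]
    have hSne : {i : ℕ | ∃ h : i < n, u ⟨i, h⟩ ≠ v ⟨i, h⟩}.Nonempty := by
      obtain ⟨i, hi⟩ := Function.ne_iff.mp h
      exact ⟨i, i.isLt, by simpa using hi⟩
    set S := {i : ℕ | ∃ h : i < n, u ⟨i, h⟩ ≠ v ⟨i, h⟩}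
    set T := {i : ℕ | ∃ h : i < n + 1,
      (Fin.cons b u : Leaf (n+1)) ⟨i, h⟩ ≠ (Fin.cons b v : Leaf (n+1)) ⟨i, h⟩}
    have key : sInf T = sInf S + 1 := by
      have hmemS : sInf S ∈ S := Nat.sInf_mem hSne
      obtain ⟨hlt, hne'⟩ := hmemS
      have hT1 : sInf S + 1 ∈ T := by
        refine ⟨Nat.succ_lt_succ hlt, ?_⟩
        have : (⟨sInf S + 1, Nat.succ_lt_succ hlt⟩ : Fin (n+1)) =
            Fin.succ ⟨sInf S, hlt⟩ := rfl
        rw [this]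
        simpa only [Fin.cons_succ] using hne'
      apply le_antisymm (Nat.sInf_le hT1)
      refine le_csInf ⟨_, hT1⟩ ?_
      rintro j ⟨hj, hjne⟩
      match j, hj with
      | 0, hj => simp at hjne
      | (i+1), hj =>
        have hi : i < n := Nat.lt_of_succ_lt_succ hj
        have : i ∈ S := ⟨hi, by
          have : (⟨i+1, hj⟩ : Fin (n+1)) = Fin.succ ⟨i, hi⟩ := rfl
          rw [this] at hjne
          simpa only [Fin.cons_succ] using hjne⟩
        exact Nat.succ_le_succ (Nat.sInf_le this)
    rw [key]
    have hle : sInf S < n := (Nat.sInf_mem hSne).1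
    omega

lemma meetAge_cons_ne {n : ℕ} (b b' : Bool) (hbb : b ≠ b') (u v : Leaf n) :
    meetAge (Fin.cons b u) (Fin.cons b' v) = n + 1 := by
  have hne : (Fin.cons b u : Leaf (n+1)) ≠ Fin.cons b' v := by
    intro hc
    exact hbb (by simpa using congrFun hc 0)
  unfold meetAge
  rw [if_neg hne]
  have h0 : (0:ℕ) ∈ {i : ℕ | ∃ h : i < n + 1,
      (Fin.cons b u : Leaf (n+1)) ⟨i, h⟩ ≠ (Fin.cons b' v : Leaf (n+1)) ⟨i, h⟩} := by
    refine ⟨Nat.succ_pos n, ?_⟩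
    simpa using hbb
  have : sInf {i : ℕ | ∃ h : i < n + 1,
      (Fin.cons b u : Leaf (n+1)) ⟨i, h⟩ ≠ (Fin.cons b' v : Leaf (n+1)) ⟨i, h⟩} = 0 :=
    Nat.le_zero.mp (Nat.sInf_le h0)
  rw [this]
  omega

lemma trunc_cons {n : ℕ} (k : ℕ) (hk : k ≤ n) (b : Bool) (u : Leaf n) :
    trunc k (Fin.cons b u : Leaf (n+1)) = Fin.cons b (trunc k u) := by
  funext i
  refine Fin.cases ?_ (fun j => ?_) i
  · simp [trunc]
    omega
  · simp only [trunc, Fin.cons_succ]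
    have h1 : ((j.succ : Fin (n+1)) : ℕ) = (j : ℕ) + 1 := rfl
    rw [h1]
    have h2 : n + 1 - k = (n - k) + 1 := by omega
    rw [h2]
    by_cases hj : (j:ℕ) < n - k
    · rw [if_pos (by omega), if_pos hj]
    · rw [if_neg (by omega), if_neg hj]

lemma trunc_top {n : ℕ} (w : Leaf (n+1)) :
    trunc (n+1) w = fun _ => false := by
  funext i
  simp [trunc]


-- ============ glue ============

def glue {n : ℕ} (B₀ B₁ : Finset (Leaf n)) : Finset (Leaf (n+1)) :=
  B₀.image (Fin.cons false) ∪ B₁.image (Fin.cons true)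

lemma mem_branchPts {n : ℕ} {A : Finset (Leaf n)} {k : ℕ} {w : Leaf n} :
    w ∈ branchPts A k ↔ ∃ u v, u ∈ A ∧ v ∈ A ∧ meetAge u v = k ∧ trunc k u = w := by
  simp only [branchPts, Finset.mem_image, Finset.mem_filter, Finset.mem_product,
    Prod.exists]
  constructor
  · rintro ⟨u, v, ⟨⟨hu, hv⟩, hm⟩, ht⟩
    exact ⟨u, v, hu, hv, hm, ht⟩
  · rintro ⟨u, v, hu, hv, hm, ht⟩
    exact ⟨u, v, ⟨⟨hu, hv⟩, hm⟩, ht⟩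

lemma mem_glue {n : ℕ} {B₀ B₁ : Finset (Leaf n)} {w : Leaf (n+1)} :
    w ∈ glue B₀ B₁ ↔ (∃ u ∈ B₀, Fin.cons false u = w) ∨ (∃ u ∈ B₁, Fin.cons true u = w) := by
  simp [glue, Finset.mem_union, Finset.mem_image]

lemma branchPts_glue {n : ℕ} (B₀ B₁ : Finset (Leaf n)) (k : ℕ) (hk : k ≤ n) :
    branchPts (glue B₀ B₁) k =
      (branchPts B₀ k).image (Fin.cons false) ∪ (branchPts B₁ k).image (Fin.cons true) := by
  ext w
  simp only [Finset.mem_union, Finset.mem_image]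
  constructor
  · intro hw
    obtain ⟨u, v, hu, hv, hm, ht⟩ := mem_branchPts.mp hw
    rw [mem_glue] at hu hv
    rcases hu with ⟨a, ha, rfl⟩ | ⟨a, ha, rfl⟩ <;> rcases hv with ⟨c, hc, rfl⟩ | ⟨c, hc, rfl⟩
    · rw [meetAge_cons_same] at hm
      exact Or.inl ⟨trunc k a, mem_branchPts.mpr ⟨a, c, ha, hc, hm, rfl⟩, by
        rw [← ht, trunc_cons k hk]⟩
    · rw [meetAge_cons_ne false true (by simp) a c] at hm; omega
    · rw [meetAge_cons_ne true false (by simp) a c] at hm; omega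
    · rw [meetAge_cons_same] at hm
      exact Or.inr ⟨trunc k a, mem_branchPts.mpr ⟨a, c, ha, hc, hm, rfl⟩, by
        rw [← ht, trunc_cons k hk]⟩
  · rintro (⟨x, hx, rfl⟩ | ⟨x, hx, rfl⟩)
    · obtain ⟨u, v, hu, hv, hm, ht⟩ := mem_branchPts.mp hx
      refine mem_branchPts.mpr ⟨Fin.cons false u, Fin.cons false v,
        mem_glue.mpr (Or.inl ⟨u, hu, rfl⟩), mem_glue.mpr (Or.inl ⟨v, hv, rfl⟩), ?_, ?_⟩
      · rw [meetAge_cons_same]; exact hm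
      · rw [trunc_cons k hk, ht]
    · obtain ⟨u, v, hu, hv, hm, ht⟩ := mem_branchPts.mp hx
      refine mem_branchPts.mpr ⟨Fin.cons true u, Fin.cons true v,
        mem_glue.mpr (Or.inr ⟨u, hu, rfl⟩), mem_glue.mpr (Or.inr ⟨v, hv, rfl⟩), ?_, ?_⟩
      · rw [meetAge_cons_same]; exact hm
      · rw [trunc_cons k hk, ht]

lemma cons_inj {n : ℕ} (b : Bool) :
    Function.Injective (fun u : Leaf n => (Fin.cons b u : Leaf (n+1))) := by
  intro a c h
  have := congrArg Fin.tail h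
  simpa [Fin.tail_cons] using this

lemma disjoint_cons_images {n : ℕ} (S T : Finset (Leaf n)) :
    Disjoint (S.image fun u => (Fin.cons false u : Leaf (n+1)))
      (T.image fun u => (Fin.cons true u : Leaf (n+1))) := by
  rw [Finset.disjoint_left]
  rintro w hw hw'
  obtain ⟨a, _, rfl⟩ := Finset.mem_image.mp hw
  obtain ⟨c, _, hc⟩ := Finset.mem_image.mp hw'
  have := congrFun hc 0
  simp at this

lemma bcount_glue {n : ℕ} (B₀ B₁ : Finset (Leaf n)) (k : ℕ) (hk : k ≤ n) :
    bcount (glue B₀ B₁) k = bcount B₀ k + bcount B₁ k := by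
  unfold bcount
  rw [branchPts_glue B₀ B₁ k hk,
    Finset.card_union_of_disjoint (disjoint_cons_images _ _),
    Finset.card_image_of_injective _ (cons_inj false),
    Finset.card_image_of_injective _ (cons_inj true)]

lemma bcount_glue_top {n : ℕ} (B₀ B₁ : Finset (Leaf n)) :
    bcount (glue B₀ B₁) (n+1) = if B₀.Nonempty ∧ B₁.Nonempty then 1 else 0 := by
  unfold bcount
  split
  · next hne =>
    obtain ⟨⟨a, ha⟩, ⟨c, hc⟩⟩ := hne
    have : branchPts (glue B₀ B₁) (n+1) = {(fun _ => false : Leaf (n+1))} := by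
      ext w
      rw [Finset.mem_singleton, mem_branchPts]
      constructor
      · rintro ⟨u, v, _, _, _, ht⟩
        rw [← ht, trunc_top]
      · rintro rfl
        refine ⟨Fin.cons false a, Fin.cons true c,
          mem_glue.mpr (Or.inl ⟨a, ha, rfl⟩), mem_glue.mpr (Or.inr ⟨c, hc, rfl⟩), ?_,
          trunc_top _⟩
        exact meetAge_cons_ne false true (by simp) a c
    rw [this, Finset.card_singleton]
  · next hne =>
    have hcases : B₀ = ∅ ∨ B₁ = ∅ := by
      by_contra hc
      push_neg at hc
      exact hne ⟨hc.1, hc.2⟩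
    have : branchPts (glue B₀ B₁) (n+1) = ∅ := by
      rw [Finset.eq_empty_iff_forall_notMem]
      intro w hw
      obtain ⟨u, v, hu, hv, hm, _⟩ := mem_branchPts.mp hw
      rw [mem_glue] at hu hv
      rcases hcases with h0 | h0 <;> subst h0 <;>
        simp only [Finset.notMem_empty, false_and, exists_false, false_or, or_false] at hu hv <;>
        obtain ⟨a, _, rfl⟩ := hu <;> obtain ⟨c, _, rfl⟩ := hv <;>
        rw [meetAge_cons_same] at hm <;>
        exact absurd hm (by have := meetAge_le a c; omega)
    rw [this, Finset.card_empty]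

lemma card_glue {n : ℕ} (B₀ B₁ : Finset (Leaf n)) :
    (glue B₀ B₁).card = B₀.card + B₁.card := by
  unfold glue
  rw [Finset.card_union_of_disjoint (disjoint_cons_images _ _),
    Finset.card_image_of_injective _ (cons_inj false),
    Finset.card_image_of_injective _ (cons_inj true)]

lemma glue_bijective (n : ℕ) :
    Function.Bijective (fun p : Finset (Leaf n) × Finset (Leaf n) => glue p.1 p.2) := by
  rw [Function.bijective_iff_has_inverse]
  refine ⟨fun A => ((A.filter (fun u => u 0 = false)).image Fin.tail,
    (A.filter (fun u => u 0 = true)).image Fin.tail), ?_, ?_⟩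
  · rintro ⟨B₀, B₁⟩
    have key : ∀ (b : Bool) (S T : Finset (Leaf n)),
        ((glue S T).filter (fun u => u 0 = b)).image Fin.tail = if b then T else S := by
      intro b S T
      ext a
      simp only [Finset.mem_image, Finset.mem_filter]
      constructor
      · rintro ⟨w, ⟨hw, hb⟩, rfl⟩
        rcases mem_glue.mp hw with ⟨c, hc, rfl⟩ | ⟨c, hc, rfl⟩ <;>
          simp only [Fin.cons_zero] at hb <;> subst hb <;>
          simpa [Fin.tail_cons] using hc
      · intro ha
        cases b
        · simp only [Bool.false_eq_true, if_false] at ha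
          exact ⟨Fin.cons false a, ⟨mem_glue.mpr (Or.inl ⟨a, ha, rfl⟩), by simp⟩,
            Fin.tail_cons _ _⟩
        · simp only [if_true] at ha
          exact ⟨Fin.cons true a, ⟨mem_glue.mpr (Or.inr ⟨a, ha, rfl⟩), by simp⟩,
            Fin.tail_cons _ _⟩
    simp only
    rw [key false B₀ B₁, key true B₀ B₁]
    simp
  · intro A
    simp only
    ext w
    rw [mem_glue]
    constructor
    · rintro (⟨u, hu, rfl⟩ | ⟨u, hu, rfl⟩)
      · obtain ⟨x, hx, rfl⟩ := Finset.mem_image.mp hu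
        rw [Finset.mem_filter] at hx
        have h2 : (Fin.cons false (Fin.tail x) : Leaf (n+1)) = x := by
          conv_lhs => rw [← hx.2]
          exact Fin.cons_self_tail x
        rw [h2]; exact hx.1
      · obtain ⟨x, hx, rfl⟩ := Finset.mem_image.mp hu
        rw [Finset.mem_filter] at hx
        have h2 : (Fin.cons true (Fin.tail x) : Leaf (n+1)) = x := by
          conv_lhs => rw [← hx.2]
          exact Fin.cons_self_tail x
        rw [h2]; exact hx.1
    · intro hw
      cases hb : w 0
      · exact Or.inl ⟨Fin.tail w, Finset.mem_image_of_mem _ (Finset.mem_filter.mpr ⟨hw, hb⟩), by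
          conv_rhs => rw [← Fin.cons_self_tail w]
          rw [hb]⟩
      · exact Or.inr ⟨Fin.tail w, Finset.mem_image_of_mem _ (Finset.mem_filter.mpr ⟨hw, hb⟩), by
          conv_rhs => rw [← Fin.cons_self_tail w]
          rw [hb]⟩


-- ============ partition function recursion ============

variable (hs : ℕ → ℝ) (J : ℝ)

def Sfun (n : ℕ) (A : Finset (Leaf n)) : ℝ :=
  ∑ k ∈ Finset.range (n + 1), hs k * (bcount A k : ℝ)

def gfun (n : ℕ) (A : Finset (Leaf n)) : ℝ :=
  Real.exp (J * (A.card : ℝ) - Sfun hs n A)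

def Xfull (n : ℕ) : ℝ := ∑ A : Finset (Leaf n), gfun hs J n A

lemma bcount_empty {n : ℕ} (k : ℕ) : bcount (∅ : Finset (Leaf n)) k = 0 := by
  simp [bcount, branchPts]

lemma Sfun_empty (n : ℕ) : Sfun hs n (∅ : Finset (Leaf n)) = 0 := by
  simp [Sfun, bcount_empty]

lemma gfun_empty (n : ℕ) : gfun hs J n (∅ : Finset (Leaf n)) = 1 := by
  simp [gfun, Sfun_empty]

lemma Sfun_glue (n : ℕ) (B₀ B₁ : Finset (Leaf n)) :
    Sfun hs (n+1) (glue B₀ B₁) = Sfun hs n B₀ + Sfun hs n B₁ +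
      (if B₀.Nonempty ∧ B₁.Nonempty then hs (n+1) else 0) := by
  unfold Sfun
  rw [Finset.sum_range_succ]
  have h1 : ∀ k ∈ Finset.range (n+1),
      hs k * (bcount (glue B₀ B₁) k : ℝ) =
        hs k * (bcount B₀ k : ℝ) + hs k * (bcount B₁ k : ℝ) := by
    intro k hk
    rw [bcount_glue B₀ B₁ k (Nat.lt_succ_iff.mp (Finset.mem_range.mp hk))]
    push_cast
    ring
  rw [Finset.sum_congr rfl h1, Finset.sum_add_distrib, bcount_glue_top]
  by_cases hne : B₀.Nonempty ∧ B₁.Nonempty <;> simp [hne]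

lemma gfun_glue (n : ℕ) (B₀ B₁ : Finset (Leaf n)) :
    gfun hs J (n+1) (glue B₀ B₁) = gfun hs J n B₀ * gfun hs J n B₁ *
      (if B₀.Nonempty ∧ B₁.Nonempty then Real.exp (-hs (n+1)) else 1) := by
  unfold gfun
  rw [Sfun_glue, card_glue]
  by_cases hne : B₀.Nonempty ∧ B₁.Nonempty
  · rw [if_pos hne, if_pos hne, ← Real.exp_add, ← Real.exp_add]
    congr 1
    push_cast
    ring
  · rw [if_neg hne, if_neg hne, ← Real.exp_add, mul_one]
    congr 1
    push_cast
    ring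

lemma sum_gfun_ind (n : ℕ) :
    ∑ B : Finset (Leaf n), gfun hs J n B * (if B.Nonempty then (1:ℝ) else 0) =
      Xfull hs J n - 1 := by
  have h1 : ∀ B : Finset (Leaf n),
      gfun hs J n B * (if B.Nonempty then (1:ℝ) else 0) =
        gfun hs J n B - (if B = ∅ then gfun hs J n B else 0) := by
    intro B
    rcases Finset.eq_empty_or_nonempty B with rfl | hB
    · simp
    · rw [if_pos hB, if_neg hB.ne_empty, mul_one, sub_zero]
  rw [Finset.sum_congr rfl (fun B _ => h1 B), Finset.sum_sub_distrib,
    Finset.sum_ite_eq' Finset.univ (∅ : Finset (Leaf n)) (gfun hs J n),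
    if_pos (Finset.mem_univ _), gfun_empty]
  rfl

lemma Xfull_rec (n : ℕ) :
    Xfull hs J (n+1) = Xfull hs J n ^ 2 -
      (1 - Real.exp (-hs (n+1))) * (Xfull hs J n - 1) ^ 2 := by
  have hbij := glue_bijective n
  have h0 : Xfull hs J (n+1) =
      ∑ p : Finset (Leaf n) × Finset (Leaf n), gfun hs J (n+1) (glue p.1 p.2) :=
    (Fintype.sum_bijective _ hbij _ _ (fun p => rfl)).symm
  rw [h0]
  have h1 : ∀ p : Finset (Leaf n) × Finset (Leaf n),
      gfun hs J (n+1) (glue p.1 p.2) =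
        gfun hs J n p.1 * gfun hs J n p.2 -
          (1 - Real.exp (-hs (n+1))) *
            ((gfun hs J n p.1 * (if p.1.Nonempty then (1:ℝ) else 0)) *
             (gfun hs J n p.2 * (if p.2.Nonempty then (1:ℝ) else 0))) := by
    intro p
    rw [gfun_glue]
    by_cases h1 : p.1.Nonempty <;> by_cases h2 : p.2.Nonempty <;>
      simp [h1, h2] <;> ring
  rw [Finset.sum_congr rfl (fun p _ => h1 p), Finset.sum_sub_distrib, ← Finset.mul_sum]
  rw [Fintype.sum_prod_type, Fintype.sum_prod_type]
  dsimp only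
  rw [← Finset.sum_mul_sum]
  have e : ∑ x : Finset (Leaf n), ∑ y : Finset (Leaf n),
      (gfun hs J n x * if x.Nonempty then (1:ℝ) else 0) *
        (gfun hs J n y * if y.Nonempty then (1:ℝ) else 0) =
      (∑ x : Finset (Leaf n), gfun hs J n x * if x.Nonempty then (1:ℝ) else 0) *
        (∑ y : Finset (Leaf n), gfun hs J n y * if y.Nonempty then (1:ℝ) else 0) :=
    (Finset.sum_mul_sum _ _ _ _).symm
  rw [e]
  rw [sum_gfun_ind]
  have : ∑ x : Finset (Leaf n), gfun hs J n x = Xfull hs J n := rfl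
  rw [this]
  ring

def xseq : ℕ → ℝ
  | 0 => Real.exp (J - hs 0)
  | n + 1 => 2 * xseq n + Real.exp (-hs (n+1)) * xseq n ^ 2

lemma bcount_singleton_zero {n : ℕ} (u : Leaf n) : bcount ({u} : Finset (Leaf n)) 0 = 1 := by
  unfold bcount branchPts
  rw [Finset.singleton_product_singleton, Finset.filter_singleton, if_pos (meetAge_self u),
    Finset.image_singleton, Finset.card_singleton]

lemma Xfull_eq_xseq (n : ℕ) : Xfull hs J n = 1 + xseq hs J n := by
  induction n with
  | zero =>
    have huniv : (Finset.univ : Finset (Finset (Leaf 0))) =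
        {∅, {(default : Leaf 0)}} := by
      ext A
      simp only [Finset.mem_univ, true_iff, Finset.mem_insert, Finset.mem_singleton]
      rcases Finset.eq_empty_or_nonempty A with rfl | hA
      · exact Or.inl rfl
      · refine Or.inr (Finset.eq_singleton_iff_nonempty_unique_mem.mpr ⟨hA, fun x _ => ?_⟩)
        exact Subsingleton.elim x default
    rw [Xfull, huniv, Finset.sum_pair (by
      intro hc
      have : (default : Leaf 0) ∈ (∅ : Finset (Leaf 0)) := hc ▸ Finset.mem_singleton_self _
      simp at this)]
    rw [gfun_empty]
    congr 1
    unfold gfun Sfun xseq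
    rw [Finset.sum_range_one, bcount_singleton_zero]
    simp
  | succ n ih =>
    rw [Xfull_rec, ih]
    show _ = 1 + (2 * xseq hs J n + Real.exp (-hs (n+1)) * xseq hs J n ^ 2)
    ring

lemma xseq_pos (n : ℕ) : 0 < xseq hs J n := by
  induction n with
  | zero => exact Real.exp_pos _
  | succ n ih =>
    have := Real.exp_pos (-hs (n+1))
    have h2 : (0:ℝ) < xseq hs J n ^ 2 := by positivity
    show (0:ℝ) < 2 * xseq hs J n + Real.exp (-hs (n+1)) * xseq hs J n ^ 2
    nlinarith

lemma Z_eq (n : ℕ) :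
    Z n (foPhi n hs (hs n)) J = 1 + Real.exp (-hs n) * xseq hs J n := by
  have h1 : ∀ A : Finset (Leaf n), Real.exp (J * (A.card : ℝ) - foPhi n hs (hs n) A) =
      if A = ∅ then 1 else Real.exp (-hs n) * gfun hs J n A := by
    intro A
    unfold foPhi
    rcases Finset.eq_empty_or_nonempty A with rfl | hA
    · simp
    · rw [if_neg hA.ne_empty, if_neg hA.ne_empty, gfun, Sfun, ← Real.exp_add]
      congr 1
      ring
  unfold Z
  rw [Finset.sum_congr rfl (fun A _ => h1 A)]
  rw [← Finset.add_sum_erase Finset.univ _ (Finset.mem_univ (∅ : Finset (Leaf n)))]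
  rw [if_pos rfl]
  have h2 : ∀ A ∈ Finset.univ.erase (∅ : Finset (Leaf n)),
      (if A = ∅ then (1:ℝ) else Real.exp (-hs n) * gfun hs J n A) =
        Real.exp (-hs n) * gfun hs J n A := by
    intro A hA
    rw [if_neg (Finset.mem_erase.mp hA).1]
  rw [Finset.sum_congr rfl h2, ← Finset.mul_sum]
  have h3 : ∑ A ∈ Finset.univ.erase (∅ : Finset (Leaf n)), gfun hs J n A =
      Xfull hs J n - 1 := by
    have := Finset.add_sum_erase Finset.univ (gfun hs J n) (Finset.mem_univ (∅ : Finset (Leaf n)))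
    rw [gfun_empty] at this
    have h4 : ∑ A : Finset (Leaf n), gfun hs J n A = Xfull hs J n := rfl
    linarith [this ▸ h4]
  rw [h3, Xfull_eq_xseq]
  ring


-- ============ analysis: basic bounds ============

lemma xseq_succ_eq (n : ℕ) :
    xseq hs J (n+1) = xseq hs J n * (2 + xseq hs J n * Real.exp (-hs (n+1))) := by
  show 2 * xseq hs J n + Real.exp (-hs (n+1)) * xseq hs J n ^ 2 = _
  ring

lemma xseq_ge_pow (n : ℕ) : 2^n * xseq hs J 0 ≤ xseq hs J n := by
  induction n with
  | zero => simp
  | succ n ih =>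
    rw [xseq_succ_eq]
    have h1 : 0 < xseq hs J n := xseq_pos hs J n
    have h2 : 0 ≤ xseq hs J n * Real.exp (-hs (n+1)) :=
      mul_nonneg h1.le (Real.exp_pos _).le
    have h3 : xseq hs J n * 2 ≤ xseq hs J n * (2 + xseq hs J n * Real.exp (-hs (n+1))) := by
      apply mul_le_mul_of_nonneg_left (by linarith) h1.le
    calc 2^(n+1) * xseq hs J 0 = 2 * (2^n * xseq hs J 0) := by ring
    _ ≤ 2 * xseq hs J n := by linarith
    _ ≤ _ := by linarith

lemma xseq_ge_zero' (n : ℕ) : xseq hs J 0 ≤ xseq hs J n := by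
  have h1 := xseq_ge_pow hs J n
  have h2 : (1:ℝ) ≤ 2^n := one_le_pow₀ (by norm_num)
  nlinarith [xseq_pos hs J 0]

lemma log_xseq_succ (n : ℕ) :
    Real.log (xseq hs J (n+1)) = Real.log (xseq hs J n) +
      (Real.log 2 + Real.log (1 + xseq hs J n * Real.exp (-hs (n+1)) / 2)) := by
  have h1 : 0 < xseq hs J n := xseq_pos hs J n
  have h2 : 0 < xseq hs J n * Real.exp (-hs (n+1)) := mul_pos h1 (Real.exp_pos _)
  rw [xseq_succ_eq, Real.log_mul h1.ne' (by positivity)]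
  congr 1
  have : 2 + xseq hs J n * Real.exp (-hs (n+1)) =
      2 * (1 + xseq hs J n * Real.exp (-hs (n+1)) / 2) := by ring
  rw [this, Real.log_mul (by norm_num) (by positivity)]

lemma min_le_log_one_add {s : ℝ} (h0 : 0 ≤ s) : min 1 s / 2 ≤ Real.log (1 + s) := by
  have hpos : (0:ℝ) < 1 + s := by linarith
  have h1 : 1 - (1 + s)⁻¹ ≤ Real.log (1 + s) := Real.one_sub_inv_le_log_of_pos hpos
  have h2 : 1 - (1 + s)⁻¹ = s / (1 + s) := by field_simp; ring
  have h3 : min 1 s / 2 ≤ s / (1 + s) := by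
    rw [div_le_div_iff₀ (by norm_num) hpos]
    rcases le_total s 1 with h | h
    · rw [min_eq_right h]; nlinarith
    · rw [min_eq_left h]; nlinarith
  linarith

/-- the per-step entropy chain bound -/
lemma log_xseq_chain (m : ℕ) :
    Real.log (xseq hs J 0) + m * Real.log 2 +
      ∑ n ∈ Finset.range m, (min 1 (2^n * xseq hs J 0 * Real.exp (-hs (n+1)) / 2) / 2)
      ≤ Real.log (xseq hs J m) := by
  induction m with
  | zero => simp
  | succ m ih =>
    rw [Finset.sum_range_succ, log_xseq_succ]
    have h1 : min 1 (2^m * xseq hs J 0 * Real.exp (-hs (m+1)) / 2) / 2 ≤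
        Real.log (1 + xseq hs J m * Real.exp (-hs (m+1)) / 2) := by
      refine le_trans ?_ (min_le_log_one_add (by have := xseq_pos hs J m; positivity))
      have hle : 2^m * xseq hs J 0 * Real.exp (-hs (m+1)) / 2 ≤
          xseq hs J m * Real.exp (-hs (m+1)) / 2 := by
        have := xseq_ge_pow hs J m
        have he := (Real.exp_pos (-hs (m+1))).le
        apply div_le_div_of_nonneg_right ?_ (by norm_num)
        · exact mul_le_mul_of_nonneg_right this he
      have := min_le_min (le_refl (1:ℝ)) hle
      linarith
    push_cast
    linarith


-- ============ analysis: harmonic and limit ============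

lemma harmonic_lb (K : ℕ) (hK : 1 ≤ K) (m : ℕ) :
    Real.log (m+1) - Real.log K ≤
      ∑ n ∈ Finset.range m, (if K ≤ n+1 then ((n:ℝ)+1)⁻¹ else 0) := by
  induction m with
  | zero =>
    simp only [Finset.range_zero, Finset.sum_empty]
    have : (0:ℝ) ≤ Real.log K := Real.log_nonneg (by exact_mod_cast hK)
    simp only [Nat.cast_zero, zero_add, Real.log_one]
    linarith
  | succ m ih =>
    rw [Finset.sum_range_succ]
    by_cases hKm : K ≤ m + 1
    · rw [if_pos hKm]
      have hstep : Real.log ((m:ℝ)+1+1) ≤ Real.log ((m:ℝ)+1) + ((m:ℝ)+1)⁻¹ := by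
        have hpos : (0:ℝ) < (m:ℝ)+1 := by positivity
        have h1 : Real.log (((m:ℝ)+1+1)/((m:ℝ)+1)) ≤ ((m:ℝ)+1+1)/((m:ℝ)+1) - 1 :=
          Real.log_le_sub_one_of_pos (by positivity)
        rw [Real.log_div (by positivity) hpos.ne'] at h1
        have h2 : ((m:ℝ)+1+1)/((m:ℝ)+1) - 1 = ((m:ℝ)+1)⁻¹ := by field_simp; ring
        linarith
      push_cast
      push_cast at ih
      linarith
    · rw [if_neg hKm]
      have hm2 : (m:ℝ) + 1 + 1 ≤ (K:ℝ) := by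
        have : m + 2 ≤ K := by omega
        exact_mod_cast this
      have : Real.log ((m:ℝ)+1+1) ≤ Real.log K :=
        Real.log_le_log (by positivity) hm2
      have hnn : (0:ℝ) ≤ ∑ n ∈ Finset.range m, (if K ≤ n+1 then ((n:ℝ)+1)⁻¹ else 0) := by
        apply Finset.sum_nonneg
        intro i _
        split <;> positivity
      push_cast
      linarith

section WithHyp

variable (hmono : Monotone hs) (hsum : Summable fun k : ℕ => hs k / 2 ^ k)

include hmono hsum in
lemma habs : Summable (fun k : ℕ => |hs k| / 2 ^ k) := by
  have hgeo : Summable (fun k : ℕ => 2 * |hs 0| * (1/2:ℝ)^k) :=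
    summable_geometric_two.mul_left _
  apply Summable.of_nonneg_of_le (fun k => by positivity)
    (fun k => ?_) (hsum.add hgeo)
  have h1 : |hs k| ≤ hs k + 2 * |hs 0| := by
    rcases abs_cases (hs k) with ⟨he, _⟩ | ⟨he, hneg⟩
    · have : (0:ℝ) ≤ |hs 0| := abs_nonneg _
      linarith
    · have h0k : hs 0 ≤ hs k := hmono (Nat.zero_le k)
      have : -hs 0 ≤ |hs 0| := neg_le_abs _
      linarith
  have h2 : ((1:ℝ)/2)^k = 1 / 2^k := by
    rw [div_pow, one_pow]
  rw [h2]
  have hpow : (0:ℝ) < 2^k := by positivity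
  rw [mul_one_div]
  rw [← add_div]
  exact div_le_div_of_nonneg_right h1 hpow.le

end WithHyp


-- ============ analysis: convergence ============

def useq (n : ℕ) : ℝ := Real.log (xseq hs J n)

def aseq (n : ℕ) : ℝ := useq hs J n / 2^n

def dseq (n : ℕ) : ℝ := aseq hs J (n+1) - aseq hs J n

def Ttail (m : ℕ) : ℝ := ∑' j : ℕ, hs (j + (m+1)) / 2^(j + (m+1))

lemma dseq_eq (n : ℕ) :
    dseq hs J n = Real.log (2 / xseq hs J n + Real.exp (-hs (n+1))) / 2^(n+1) := by
  have hxn : 0 < xseq hs J n := xseq_pos hs J n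
  have hb : 0 < 2 + xseq hs J n * Real.exp (-hs (n+1)) := by positivity
  have h1 : useq hs J (n+1) = useq hs J n +
      Real.log (2 + xseq hs J n * Real.exp (-hs (n+1))) := by
    unfold useq
    rw [xseq_succ_eq, Real.log_mul hxn.ne' hb.ne']
  have h2 : 2 / xseq hs J n + Real.exp (-hs (n+1)) =
      (2 + xseq hs J n * Real.exp (-hs (n+1))) / xseq hs J n := by
    field_simp
  rw [dseq, aseq, aseq, h1, h2, Real.log_div hb.ne' hxn.ne']
  unfold useq
  rw [pow_succ]
  have h2n : (0:ℝ) < 2^n := by positivity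
  field_simp
  ring

lemma dseq_lower (n : ℕ) : -(hs (n+1) / 2^(n+1)) ≤ dseq hs J n := by
  rw [dseq_eq, ← neg_div]
  apply div_le_div_of_nonneg_right ?_ (by positivity : (0:ℝ) < 2^(n+1)).le
  have harg : Real.exp (-hs (n+1)) ≤ 2 / xseq hs J n + Real.exp (-hs (n+1)) := by
    have : (0:ℝ) ≤ 2 / xseq hs J n := by
      have := xseq_pos hs J n; positivity
    linarith
  have := Real.log_le_log (Real.exp_pos _) harg
  rwa [Real.log_exp] at this

lemma dseq_upper (hmono : Monotone hs) (n : ℕ) :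
    dseq hs J n ≤ Real.log (2 / xseq hs J 0 + Real.exp (-hs 0)) / 2^(n+1) := by
  rw [dseq_eq]
  apply div_le_div_of_nonneg_right ?_ (by positivity : (0:ℝ) < 2^(n+1)).le
  have hx0 : 0 < xseq hs J 0 := xseq_pos hs J 0
  have hxn : 0 < xseq hs J n := xseq_pos hs J n
  apply Real.log_le_log (by positivity)
  have h1 : 2 / xseq hs J n ≤ 2 / xseq hs J 0 :=
    div_le_div_of_nonneg_left (by norm_num) hx0 (xseq_ge_zero' hs J n)
  have h2 : Real.exp (-hs (n+1)) ≤ Real.exp (-hs 0) :=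
    Real.exp_le_exp.mpr (neg_le_neg (hmono (Nat.zero_le (n+1))))
  linarith

lemma summable_dseq (hmono : Monotone hs) (hsum : Summable fun k : ℕ => hs k / 2 ^ k) :
    Summable (dseq hs J) := by
  set c₂ := Real.log (2 / xseq hs J 0 + Real.exp (-hs 0)) with hc2
  have habs' := habs hs hmono hsum
  have hshift : Summable (fun n : ℕ => |hs (n+1)| / 2^(n+1)) :=
    (summable_nat_add_iff (f := fun k : ℕ => |hs k| / 2^k) 1).mpr habs'
  have hc2' : Summable (fun n : ℕ => |c₂| / 2^(n+1)) := by
    have h1 : Summable (fun n : ℕ => |c₂| * (1/2:ℝ)^(n+1)) :=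
      (summable_nat_add_iff (f := fun k : ℕ => |c₂| * (1/2:ℝ)^k) 1).mpr
        (summable_geometric_two.mul_left _)
    apply h1.congr
    intro n
    rw [div_pow, one_pow, mul_one_div]
  apply Summable.of_abs
  apply Summable.of_nonneg_of_le (fun n => abs_nonneg _) (fun n => ?_) (hshift.add hc2')
  have hl := dseq_lower hs J n
  have hu := dseq_upper hs J hmono n
  rw [abs_le]
  constructor
  · have h1 : hs (n+1) / 2^(n+1) ≤ |hs (n+1)| / 2^(n+1) :=
      div_le_div_of_nonneg_right (le_abs_self _) (by positivity : (0:ℝ) < 2^(n+1)).le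
    have h2 : (0:ℝ) ≤ |c₂| / 2^(n+1) := by positivity
    linarith
  · have h1 : c₂ / 2^(n+1) ≤ |c₂| / 2^(n+1) :=
      div_le_div_of_nonneg_right (le_abs_self _) (by positivity : (0:ℝ) < 2^(n+1)).le
    have h2 : (0:ℝ) ≤ |hs (n+1)| / 2^(n+1) := by positivity
    linarith

lemma aseq_partial (m : ℕ) :
    aseq hs J m = aseq hs J 0 + ∑ n ∈ Finset.range m, dseq hs J n := by
  have h1 : ∑ n ∈ Finset.range m, dseq hs J n = aseq hs J m - aseq hs J 0 :=
    Finset.sum_range_sub (aseq hs J) m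
  linarith

lemma aseq_tendsto (hmono : Monotone hs) (hsum : Summable fun k : ℕ => hs k / 2 ^ k) :
    Tendsto (aseq hs J) atTop (nhds (aseq hs J 0 + ∑' n, dseq hs J n)) := by
  have h1 := (summable_dseq hs J hmono hsum).hasSum.tendsto_sum_nat
  exact (h1.const_add (aseq hs J 0)).congr (fun m => (aseq_partial hs J m).symm)

lemma Ttail_summable (hsum : Summable fun k : ℕ => hs k / 2 ^ k) (m : ℕ) :
    Summable (fun j : ℕ => hs (j + (m+1)) / 2^(j + (m+1))) :=
  (summable_nat_add_iff (f := fun k : ℕ => hs k / 2^k) (m+1)).mpr hsum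

lemma aseq_limit_ge (hmono : Monotone hs) (hsum : Summable fun k : ℕ => hs k / 2 ^ k)
    (m : ℕ) :
    aseq hs J m - Ttail hs m ≤ aseq hs J 0 + ∑' n, dseq hs J n := by
  have hd := summable_dseq hs J hmono hsum
  have h1 := Summable.sum_add_tsum_nat_add m hd
  have h2 : aseq hs J 0 + ∑' n, dseq hs J n = aseq hs J m + ∑' i, dseq hs J (i + m) := by
    rw [← h1, aseq_partial hs J m]
    ring
  have h3 : -Ttail hs m ≤ ∑' i, dseq hs J (i + m) := by
    have hneg : Summable (fun j : ℕ => -(hs (j + (m+1)) / 2^(j + (m+1)))) :=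
      (Ttail_summable hs hsum m).neg
    have hdm : Summable (fun i => dseq hs J (i + m)) :=
      (summable_nat_add_iff (f := dseq hs J) m).mpr hd
    have hle : ∀ j : ℕ, -(hs (j + (m+1)) / 2^(j + (m+1))) ≤ dseq hs J (j + m) := by
      intro j
      exact dseq_lower hs J (j + m)
    calc -Ttail hs m = ∑' j : ℕ, -(hs (j + (m+1)) / 2^(j + (m+1))) := by
          rw [Ttail, ← tsum_neg]
    _ ≤ ∑' i, dseq hs J (i + m) := Summable.tsum_le_tsum hle hneg hdm
  linarith


-- ============ analysis: the crux ============

lemma tendsto_gseq (hlim : Tendsto (fun k : ℕ => (k : ℝ) * 2 ^ k * Real.exp (-hs k)) atTop atTop) :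
    Tendsto (fun k : ℕ => (k:ℝ) * Real.log 2 + Real.log k - hs k) atTop atTop := by
  have h1 := Real.tendsto_log_atTop.comp hlim
  refine Tendsto.congr' ?_ h1
  filter_upwards [eventually_ge_atTop 1] with k hk
  have hk0 : (0:ℝ) < k := by exact_mod_cast hk
  simp only [Function.comp_apply]
  rw [Real.log_mul (by positivity) (Real.exp_ne_zero _), Real.log_mul hk0.ne' (by positivity),
    Real.log_exp, Real.log_pow]
  push_cast
  ring

lemma summable_jgeo : Summable (fun j : ℕ => (j:ℝ) * (1/2:ℝ)^j) := by
  have h := summable_pow_mul_geometric_of_norm_lt_one (R := ℝ) 1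
    (r := (1/2:ℝ)) (by rw [Real.norm_eq_abs, abs_of_nonneg (by norm_num : (0:ℝ) ≤ 1/2)]; norm_num)
  apply h.congr
  intro n
  rw [pow_one]

lemma crux (hmono : Monotone hs) (hsum : Summable fun k : ℕ => hs k / 2 ^ k)
    (hlim : Tendsto (fun k : ℕ => (k : ℝ) * 2 ^ k * Real.exp (-hs k)) atTop atTop) :
    ∃ m : ℕ, 0 < aseq hs J m - Ttail hs m := by
  have hx0 : 0 < xseq hs J 0 := xseq_pos hs J 0
  -- step 2 : choose N₁
  obtain ⟨N₁, hN₁⟩ := (tendsto_atTop.mp hlim (16 / xseq hs J 0)).exists_forall_of_atTop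
  set K : ℕ := max N₁ 4 with hKdef
  have hK1 : 1 ≤ K := le_trans (by norm_num) (le_max_right N₁ 4)
  -- step 3 : the chain bound
  have hchain : ∀ m : ℕ, useq hs J 0 + m * Real.log 2 +
      2 * (Real.log (m+1) - Real.log K) ≤ useq hs J m := by
    intro m
    have h1 := log_xseq_chain hs J m
    have h2 : ∀ n ∈ Finset.range m,
        2 * (if K ≤ n+1 then ((n:ℝ)+1)⁻¹ else 0) ≤
          min 1 (2^n * xseq hs J 0 * Real.exp (-hs (n+1)) / 2) / 2 := by
      intro n _
      have hminpos : (0:ℝ) ≤ min 1 (2^n * xseq hs J 0 * Real.exp (-hs (n+1)) / 2) := by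
        apply le_min (by norm_num)
        positivity
      by_cases hKn : K ≤ n + 1
      · rw [if_pos hKn]
        have hn4 : 4 ≤ n + 1 := le_trans (le_max_right _ _) hKn
        have hN : N₁ ≤ n + 1 := le_trans (le_max_left _ _) hKn
        have hb := hN₁ (n+1) hN
        have hpos : (0:ℝ) < (n:ℝ)+1 := by positivity
        have hcast : ((n+1 : ℕ) : ℝ) = (n:ℝ)+1 := by push_cast; ring
        rw [hcast] at hb
        have h4 : (16 / xseq hs J 0) * (xseq hs J 0 / (4*((n:ℝ)+1))) ≤
            (((n:ℝ)+1) * 2^(n+1) * Real.exp (-hs (n+1))) * (xseq hs J 0 / (4*((n:ℝ)+1))) :=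
          mul_le_mul_of_nonneg_right hb (by positivity)
        have e1 : (16 / xseq hs J 0) * (xseq hs J 0 / (4*((n:ℝ)+1))) = 4/((n:ℝ)+1) := by
          field_simp
          ring
        have e2 : (((n:ℝ)+1) * 2^(n+1) * Real.exp (-hs (n+1))) * (xseq hs J 0 / (4*((n:ℝ)+1))) =
            2^n * xseq hs J 0 * Real.exp (-hs (n+1)) / 2 := by
          rw [pow_succ]
          field_simp
          ring
        rw [e1, e2] at h4
        have h5 : 4/((n:ℝ)+1) ≤ 1 := by
          rw [div_le_one hpos]
          have : (4:ℝ) ≤ ((n:ℕ):ℝ) + 1 := by exact_mod_cast hn4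
          linarith
        have h6 : 4/((n:ℝ)+1) ≤ min 1 (2^n * xseq hs J 0 * Real.exp (-hs (n+1)) / 2) :=
          le_min h5 h4
        have h7 : 2 * ((n:ℝ)+1)⁻¹ = (4/((n:ℝ)+1))/2 := by
          field_simp
          ring
        rw [h7]
        linarith
      · rw [if_neg hKn]
        simp only [mul_zero]
        linarith
    have h3 := Finset.sum_le_sum h2
    rw [← Finset.mul_sum] at h3
    have h4 := harmonic_lb K hK1 m
    have h5 : 2 * (Real.log (m+1) - Real.log K) ≤
        2 * ∑ n ∈ Finset.range m, (if K ≤ n+1 then ((n:ℝ)+1)⁻¹ else 0) := by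
      have := mul_le_mul_of_nonneg_left h4 (by norm_num : (0:ℝ) ≤ 2)
      linarith
    unfold useq
    linarith
  -- step 4-6 : constants
  set E : ℝ := ∑' j : ℕ, (j:ℝ) * (1/2:ℝ)^j with hEdef
  set c₅ : ℝ := Real.log 2 + 1 with hc5def
  set C : ℝ := Real.log 2 + c₅ * E / 2 + 2 * Real.log K - useq hs J 0 + 1 with hCdef
  obtain ⟨N₂, hN₂⟩ :=
    (tendsto_atTop.mp (tendsto_gseq hs hlim) C).exists_forall_of_atTop
  refine ⟨N₂, ?_⟩
  set m : ℕ := N₂ with hmdef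
  set B : ℝ := (m+1) * Real.log 2 + Real.log (m+1) - C with hBdef
  -- step 8 : tail bound
  have hT : Ttail hs m ≤ (B + c₅ * E / 2) / 2^m := by
    have hterm : ∀ j : ℕ, hs (j + (m+1)) / 2^(j + (m+1)) ≤
        (B + (j:ℝ) * c₅) / (2^j * 2^(m+1)) := by
      intro j
      have hk2 : N₂ ≤ j + m + 1 := by omega
      have hgk := hN₂ (j + m + 1) hk2
      -- hs (j+m+1) ≤ (j+m+1) log 2 + log (j+m+1) - C
      have hnum : hs (j + (m+1)) ≤ B + (j:ℝ) * c₅ := by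
        have hcast : ((j + m + 1 : ℕ) : ℝ) = (j:ℝ) + (m:ℝ) + 1 := by push_cast; ring
        rw [hcast] at hgk
        have hlog : Real.log ((j:ℝ) + (m:ℝ) + 1) ≤ Real.log ((m:ℝ)+1) + (j:ℝ) := by
          have hpos1 : (0:ℝ) < (m:ℝ)+1 := by positivity
          have hpos2 : (0:ℝ) < (j:ℝ) + (m:ℝ) + 1 := by positivity
          have hd := Real.log_le_sub_one_of_pos (show (0:ℝ) < ((j:ℝ)+(m:ℝ)+1)/((m:ℝ)+1) by positivity)
          rw [Real.log_div hpos2.ne' hpos1.ne'] at hd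
          have : ((j:ℝ)+(m:ℝ)+1)/((m:ℝ)+1) - 1 ≤ (j:ℝ) := by
            rw [div_sub_one hpos1.ne', div_le_iff₀ hpos1]
            nlinarith [Nat.cast_nonneg (α := ℝ) j, Nat.cast_nonneg (α := ℝ) m]
          linarith
        have hidx : j + (m+1) = j + m + 1 := by omega
        rw [hidx]
        rw [hBdef, hc5def]
        push_cast
        nlinarith [hgk, hlog]
      have hden : (2:ℝ)^(j + (m+1)) = 2^j * 2^(m+1) := by
        rw [pow_add]
      rw [hden]
      exact div_le_div_of_nonneg_right hnum (by positivity : (0:ℝ) < 2^j * 2^(m+1)).le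
    have hgsum : Summable (fun j : ℕ => (B + (j:ℝ) * c₅) / (2^j * 2^(m+1))) := by
      have h1 : Summable (fun j : ℕ => (B * (1/2:ℝ)^j + c₅ * ((j:ℝ) * (1/2:ℝ)^j)) / 2^(m+1)) :=
        (((summable_geometric_two.mul_left B).add ((summable_jgeo).mul_left c₅)).div_const _)
      apply h1.congr
      intro j
      have h2j : (0:ℝ) < 2^j := by positivity
      simp only [one_div, inv_pow]
      field_simp
    have h8 := Summable.tsum_le_tsum hterm (Ttail_summable hs hsum m) hgsum
    have h9 : ∑' j : ℕ, (B + (j:ℝ) * c₅) / (2^j * 2^(m+1)) = (B + c₅ * E / 2) / 2^m := by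
      have he : (fun j : ℕ => (B + (j:ℝ) * c₅) / (2^j * 2^(m+1))) =
          (fun j : ℕ => (B * (1/2:ℝ)^j + c₅ * ((j:ℝ) * (1/2:ℝ)^j)) / 2^(m+1)) := by
        funext j
        have h2j : (0:ℝ) < 2^j := by positivity
        simp only [one_div, inv_pow]
        field_simp
      rw [he, tsum_div_const,
        Summable.tsum_add (summable_geometric_two.mul_left B) ((summable_jgeo).mul_left c₅),
        tsum_mul_left, tsum_mul_left, tsum_geometric_two, ← hEdef]
      have h2m : (0:ℝ) < 2^m := by positivity
      rw [pow_succ, div_eq_div_iff (by positivity) h2m.ne']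
      ring
    rw [h9] at h8
    exact h8
  -- step 9
  have ha : (useq hs J 0 + m * Real.log 2 + 2 * (Real.log (m+1) - Real.log K)) / 2^m ≤
      aseq hs J m :=
    div_le_div_of_nonneg_right (hchain m) (by positivity : (0:ℝ) < 2^m).le
  -- step 10
  have hfinal : (Real.log (m+1) + 1) / 2^m ≤ aseq hs J m - Ttail hs m := by
    have hdiff : (useq hs J 0 + m * Real.log 2 + 2 * (Real.log (m+1) - Real.log K)) -
        (B + c₅ * E / 2) = Real.log (m+1) + 1 := by
      rw [hBdef, hCdef]
      ring
    have h1 : (useq hs J 0 + m * Real.log 2 + 2 * (Real.log (m+1) - Real.log K)) / 2^m -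
        (B + c₅ * E / 2) / 2^m = (Real.log (m+1) + 1) / 2^m := by
      rw [div_sub_div_same, hdiff]
    linarith
  have hlogpos : (0:ℝ) ≤ Real.log (m+1) := by
    apply Real.log_nonneg
    have : (0:ℝ) ≤ (m:ℝ) := Nat.cast_nonneg m
    linarith
  have h2m : (0:ℝ) < 2^m := by positivity
  calc (0:ℝ) < (Real.log (m+1) + 1) / 2^m := by positivity
  _ ≤ _ := hfinal


-- ============ final assembly ============

lemma main_analytic (hmono : Monotone hs) (hsum : Summable fun k : ℕ => hs k / 2 ^ k)
    (hlim : Tendsto (fun k : ℕ => (k : ℝ) * 2 ^ k * Real.exp (-hs k)) atTop atTop) :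
    ∃ L : ℝ, 0 < L ∧
      Tendsto (fun n => Real.log (1 + Real.exp (-hs n) * xseq hs J n) / 2 ^ n)
        atTop (nhds L) := by
  refine ⟨aseq hs J 0 + ∑' n, dseq hs J n, ?_, ?_⟩
  · obtain ⟨m, hm⟩ := crux hs J hmono hsum hlim
    have h1 := aseq_limit_ge hs J hmono hsum m
    linarith
  · have hconv := aseq_tendsto hs J hmono hsum
    set c₃ : ℝ := Real.log ((xseq hs J 0)⁻¹ + Real.exp (-hs 0)) with hc3
    have hx0 : 0 < xseq hs J 0 := xseq_pos hs J 0
    have hxn : ∀ n, 0 < xseq hs J n := xseq_pos hs J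
    have hkey : ∀ n : ℕ, Real.log (1 + Real.exp (-hs n) * xseq hs J n) / 2 ^ n =
        aseq hs J n + Real.log ((xseq hs J n)⁻¹ + Real.exp (-hs n)) / 2^n := by
      intro n
      have h1 : 1 + Real.exp (-hs n) * xseq hs J n =
          xseq hs J n * ((xseq hs J n)⁻¹ + Real.exp (-hs n)) := by
        rw [mul_add, mul_inv_cancel₀ (hxn n).ne']
        ring
      rw [h1, Real.log_mul (hxn n).ne' (by have := hxn n; positivity), add_div]
      rfl
    have hrho : Tendsto
        (fun n => Real.log ((xseq hs J n)⁻¹ + Real.exp (-hs n)) / 2^n) atTop (nhds 0) := by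
      have habs' := habs hs hmono hsum
      have hb1 : Tendsto (fun n : ℕ => |hs n| / 2^n) atTop (nhds 0) :=
        habs'.tendsto_atTop_zero
      have hb2 : Tendsto (fun n : ℕ => |c₃| / 2^n) atTop (nhds 0) := by
        have h1 : Tendsto (fun n : ℕ => |c₃| * (1/2:ℝ)^n) atTop (nhds 0) := by
          have := tendsto_pow_atTop_nhds_zero_of_lt_one
            (by norm_num : (0:ℝ) ≤ 1/2) (by norm_num : (1/2:ℝ) < 1)
          simpa using this.const_mul |c₃|
        apply h1.congr
        intro n
        rw [div_pow, one_pow, mul_one_div]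
      have hb : Tendsto (fun n : ℕ => (|hs n| + |c₃|) / 2^n) atTop (nhds 0) := by
        have := hb1.add hb2
        rw [add_zero] at this
        apply this.congr
        intro n
        rw [← add_div]
      have hbneg : Tendsto (fun n : ℕ => -((|hs n| + |c₃|) / 2^n)) atTop (nhds 0) := by
        have := hb.neg
        rwa [neg_zero] at this
      apply tendsto_of_tendsto_of_tendsto_of_le_of_le hbneg hb
      · intro n
        show -((|hs n| + |c₃|) / 2 ^ n) ≤ Real.log ((xseq hs J n)⁻¹ + Real.exp (-hs n)) / 2 ^ n
        have h2n : (0:ℝ) < 2^n := by positivity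
        have hlow : -hs n ≤ Real.log ((xseq hs J n)⁻¹ + Real.exp (-hs n)) := by
          have harg : Real.exp (-hs n) ≤ (xseq hs J n)⁻¹ + Real.exp (-hs n) := by
            have : (0:ℝ) < (xseq hs J n)⁻¹ := by have := hxn n; positivity
            linarith
          have := Real.log_le_log (Real.exp_pos _) harg
          rwa [Real.log_exp] at this
        have h3 : -(|hs n| + |c₃|) ≤ -hs n := by
          have := le_abs_self (hs n)
          have := abs_nonneg c₃
          linarith
        rw [← neg_div]
        exact div_le_div_of_nonneg_right (by linarith) h2n.le
      · intro n
        show Real.log ((xseq hs J n)⁻¹ + Real.exp (-hs n)) / 2 ^ n ≤ (|hs n| + |c₃|) / 2 ^ n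
        have h2n : (0:ℝ) < 2^n := by positivity
        have hup : Real.log ((xseq hs J n)⁻¹ + Real.exp (-hs n)) ≤ c₃ := by
          rw [hc3]
          apply Real.log_le_log (by have := hxn n; positivity)
          have h1 : (xseq hs J n)⁻¹ ≤ (xseq hs J 0)⁻¹ :=
            inv_anti₀ hx0 (xseq_ge_zero' hs J n)
          have h2 : Real.exp (-hs n) ≤ Real.exp (-hs 0) :=
            Real.exp_le_exp.mpr (neg_le_neg (hmono (Nat.zero_le n)))
          linarith
        have h3 : c₃ ≤ |hs n| + |c₃| := by
          have := le_abs_self c₃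
          have := abs_nonneg (hs n)
          linarith
        exact div_le_div_of_nonneg_right (le_trans hup h3) h2n.le
    have := hconv.add hrho
    rw [add_zero] at this
    exact this.congr (fun n => (hkey n).symm)

end AuxiliaryProofs

/-- Corollary 1.15: for non-decreasing `(h_k)` with `∑ 2⁻ᵏ h_k < ∞`
and first order branching clustering functions `Φ_n`, if `k 2ᵏ e^{-h_k} → ∞` then there
is no wetting transition: `J* = -∞`, i.e. `ζ(J) > 0` for every `J`. -/
theorem stmt9 (hs : ℕ → ℝ) (hmono : Monotone hs)
    (hsum : Summable fun k : ℕ => hs k / 2 ^ k)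
    (hlim : Tendsto (fun k : ℕ => (k : ℝ) * 2 ^ k * Real.exp (-hs k)) atTop atTop) :
    ∃ ζ : ℝ → ℝ,
      (∀ J : ℝ, Tendsto (fun n => zetaN n (foPhi n hs (hs n)) J) atTop (nhds (ζ J))) ∧
      ∀ J : ℝ, 0 < ζ J := by

  have key : ∀ J : ℝ, ∃ L : ℝ, 0 < L ∧
      Tendsto (fun n => zetaN n (foPhi n hs (hs n)) J) atTop (nhds L) := by
    intro J
    obtain ⟨L, hL, hT⟩ := main_analytic hs J hmono hsum hlim
    refine ⟨L, hL, ?_⟩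
    apply hT.congr
    intro n
    rw [zetaN, Z_eq]
  choose ζ h1 h2 using key
  exact ⟨ζ, h2, h1⟩

end PWC
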